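/- Let N ≥ 1 and let (d_j), (γ_j), (α_j), (β_j) be real sequences indexed by the integers such that d_j = γ_j + α_j·d_{j+1} + β_j·d_{j-1} for every j with i ≤ j ≤ i+N−1. Define c_{1,1} = γ_i, a_{1,1} = α_i, b_{1,1} = β_i; if N ≥ 2 assume 1 − α_i·β_{i+1} ≠ 0 and define c_{1,2} = (γ_i + α_i·γ_{i+1})/(1 − α_i·β_{i+1}), a_{1,2} = α_i·α_{i+1}/(1 − α_i·β_{i+1}), b_{1,2} = β_i/(1 − α_i·β_{i+1}); and for 2 ≤ n ≤ N−1, assuming a_{1,n-1} ≠ 0 and 1 − β_{i+n}·(a_{1,n}/a_{1,n-1}) ≠ 0, define c_{1,n+1} = [c_{1,n} + a_{1,n}·γ_{i+n} − β_{i+n}·(a_{1,n}/a_{1,n-1})·c_{1,n-1}] / (1 − β_{i+n}·(a_{1,n}/a_{1,n-1})), a_{1,n+1} = a_{1,n}·α_{i+n} / (1 − β_{i+n}·(a_{1,n}/a_{1,n-1})), b_{1,n+1} = [b_{1,n} − β_{i+n}·(a_{1,n}/a_{1,n-1})·b_{1,n-1}] / (1 − β_{i+n}·(a_{1,n}/a_{1,n-1})).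 Then for every n with 1 ≤ n ≤ N one has d_i = c_{1,n} + a_{1,n}·d_{i+n} + b_{1,n}·d_{i-1}. -/

import Mathlib

/-- **Forward extension of the three-term relation between derivative values.**
Given sequences `d, γ, α, β : ℤ → ℝ` satisfying the three-term relation
`d_j = γ_j + α_j d_{j+1} + β_j d_{j-1}` for `i ≤ j ≤ i+N−1`, and coefficients
`c_{1,n}, a_{1,n}, b_{1,n}` defined by the stated recursion (with the stated
nonvanishing assumptions on the denominators), one has
`d_i = c_{1,n} + a_{1,n} d_{i+n} + b_{1,n} d_{i-1}` for every `1 ≤ n ≤ N`. -/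
theorem forward_extension_relation
    (N : ℕ) (hN : 1 ≤ N) (i : ℤ) (d γ α β : ℤ → ℝ)
    (hrel : ∀ j : ℤ, i ≤ j → j ≤ i + (N : ℤ) - 1 →
      d j = γ j + α j * d (j + 1) + β j * d (j - 1))
    (c a b : ℕ → ℝ)
    (hc1 : c 1 = γ i) (ha1 : a 1 = α i) (hb1 : b 1 = β i)
    (h2 : 2 ≤ N →
      1 - α i * β (i + 1) ≠ 0 ∧
      c 2 = (γ i + α i * γ (i + 1)) / (1 - α i * β (i + 1)) ∧
      a 2 = α i * α (i + 1) / (1 - α i * β (i + 1)) ∧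
      b 2 = β i / (1 - α i * β (i + 1)))
    (hrec : ∀ n : ℕ, 2 ≤ n → n ≤ N - 1 →
      a (n - 1) ≠ 0 ∧
      1 - β (i + (n : ℤ)) * (a n / a (n - 1)) ≠ 0 ∧
      c (n + 1) = (c n + a n * γ (i + (n : ℤ))
                    - β (i + (n : ℤ)) * (a n / a (n - 1)) * c (n - 1)) /
                  (1 - β (i + (n : ℤ)) * (a n / a (n - 1))) ∧
      a (n + 1) = a n * α (i + (n : ℤ)) /
                  (1 - β (i + (n : ℤ)) * (a n / a (n - 1))) ∧
      b (n + 1) = (b n - β (i + (n : ℤ)) * (a n / a (n - 1)) * b (n - 1)) /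
                  (1 - β (i + (n : ℤ)) * (a n / a (n - 1)))) :
    ∀ n : ℕ, 1 ≤ n → n ≤ N →
      d i = c n + a n * d (i + (n : ℤ)) + b n * d (i - 1) := by

  intro n
  induction n using Nat.strong_induction_on with
  | _ n IH =>
  intro hn hnN
  rcases Nat.lt_or_ge n 3 with h3 | h3
  · interval_cases n
    · rw [hc1, ha1, hb1]
      have h := hrel i le_rfl (by omega)
      push_cast
      linarith
    · obtain ⟨hden, hc2, ha2, hb2⟩ := h2 (by omega)
      have h1 := hrel i le_rfl (by omega)
      have h2' := hrel (i + 1) (by omega) (by omega)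
      rw [show i + 1 + 1 = i + 2 by ring, show i + 1 - 1 = i by ring] at h2'
      rw [hc2, ha2, hb2]
      push_cast
      field_simp
      linear_combination h1 + α i * h2'
  · obtain ⟨m, rfl⟩ : ∃ m, n = m + 1 := ⟨n - 1, by omega⟩
    have hm2 : 2 ≤ m := by omega
    obtain ⟨ha0, hden, hcr, har, hbr⟩ := hrec m hm2 (by omega)
    have hPm := IH m (by omega) (by omega) (by omega)
    have hPm1 := IH (m - 1) (by omega) (by omega) (by omega)
    have hcast : ((m - 1 : ℕ) : ℤ) = (m : ℤ) - 1 := by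
      have : (1:ℕ) ≤ m := by omega
      push_cast [this]; ring
    rw [hcast, show i + ((m:ℤ) - 1) = i + (m:ℤ) - 1 by ring] at hPm1
    have hj := hrel (i + (m : ℤ)) (by omega) (by omega)
    rw [show i + (m:ℤ) + 1 = i + ((m:ℤ) + 1) by ring] at hj
    have key : (a (m-1) - β (i + (m:ℤ)) * a m) * d i
        = a (m-1) * (c m + a m * γ (i + (m:ℤ))) - β (i + (m:ℤ)) * a m * c (m-1)
          + a (m-1) * a m * α (i + (m:ℤ)) * d (i + ((m:ℤ) + 1))
          + (a (m-1) * b m - β (i + (m:ℤ)) * a m * b (m-1)) * d (i - 1) := by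
      linear_combination a (m-1) * hPm + a (m-1) * a m * hj - β (i + (m:ℤ)) * a m * hPm1
    rw [hcr, har, hbr]
    push_cast
    rw [div_mul_eq_mul_div, div_mul_eq_mul_div, ← add_div, ← add_div,
      eq_div_iff hden]
    field_simp
    linear_combination key
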